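/- Let E ⊆ ℝⁿ (n ≥ 2) be an open weakly 1-convex set with E^△ ≠ ∅. Then there exists a family of straight lines {γ(x)}_{x ∈ ∂E^△}, each γ(x) passing through x, such that (i) each γ(x) is disjoint from E, and (ii) the union ⋃_{x ∈ ∂E^△} γ(x) ∪ E^△ contains no straight line passing through a point of E^△. -/

import Mathlib

open Set Metric

/-- The closed ray with endpoint `x` in direction `α`. -/
def ray {n : ℕ} (x α : EuclideanSpace ℝ (Fin n)) : Set (EuclideanSpace ℝ (Fin n)) :=
  {z | ∃ t : ℝ, 0 ≤ t ∧ z = x + t • α}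

/-- The straight line through `x` in direction `α`. -/
def line {n : ℕ} (x α : EuclideanSpace ℝ (Fin n)) : Set (EuclideanSpace ℝ (Fin n)) :=
  {z | ∃ t : ℝ, z = x + t • α}

/-- The set `E^◇` of 1-nonsemiconvexity points of `E`. -/
def diamond {n : ℕ} (E : Set (EuclideanSpace ℝ (Fin n))) : Set (EuclideanSpace ℝ (Fin n)) :=
  {x | x ∉ E ∧ ∀ α : EuclideanSpace ℝ (Fin n), ‖α‖ = 1 → (ray x α ∩ E).Nonempty}

/-- The set `E^△` of 1-nonconvexity points of `E`. -/
def triangle {n : ℕ} (E : Set (EuclideanSpace ℝ (Fin n))) : Set (EuclideanSpace ℝ (Fin n)) :=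
  {x | x ∉ E ∧ ∀ α : EuclideanSpace ℝ (Fin n), ‖α‖ = 1 → (line x α ∩ E).Nonempty}

/-- An (open) set is weakly 1-semiconvex if through every boundary point
there passes a closed ray missing the set. -/
def WeaklySemiconvex {n : ℕ} (E : Set (EuclideanSpace ℝ (Fin n))) : Prop :=
  ∀ x ∈ frontier E, ∃ α : EuclideanSpace ℝ (Fin n), ‖α‖ = 1 ∧ ray x α ∩ E = ∅

/-- An (open) set is weakly 1-convex if through every boundary point
there passes a straight line missing the set. -/
def WeaklyConvex {n : ℕ} (E : Set (EuclideanSpace ℝ (Fin n))) : Prop :=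
  ∀ x ∈ frontier E, ∃ α : EuclideanSpace ℝ (Fin n), ‖α‖ = 1 ∧ line x α ∩ E = ∅


open Filter Topology

lemma triangle_isOpen {n : ℕ} {E : Set (EuclideanSpace ℝ (Fin n))}
    (hE : IsOpen E) (hwc : WeaklyConvex E) : IsOpen (triangle E) := by
  rw [Metric.isOpen_iff]
  intro x hx
  have hxcl : x ∉ closure E := by
    intro hcl
    have hfr : x ∈ frontier E := ⟨hcl, by simpa [hE.interior_eq] using hx.1⟩
    obtain ⟨α, hα, hαE⟩ := hwc x hfr
    exact absurd (hx.2 α hα) (by simp [hαE])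
  obtain ⟨δ, hδ, hball⟩ := Metric.isOpen_iff.mp (isClosed_closure (s := E)).isOpen_compl x hxcl
  by_contra h
  push_neg at h
  have hseq : ∀ k : ℕ, ∃ y, y ∈ ball x (min δ (1/(k+1))) ∧ y ∉ triangle E := by
    intro k
    have hpos : 0 < min δ (1/(k+1)) := lt_min hδ (by positivity)
    obtain ⟨y, hy1, hy2⟩ := not_subset.mp (h _ hpos)
    exact ⟨y, hy1, hy2⟩
  choose y hy1 hy2 using hseq
  have hyE : ∀ k, y k ∉ E := fun k =>
    fun hk => hball (ball_subset_ball (min_le_left _ _) (hy1 k)) (subset_closure hk)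
  have hα : ∀ k, ∃ α : EuclideanSpace ℝ (Fin n), ‖α‖ = 1 ∧ line (y k) α ∩ E = ∅ := by
    intro k
    have := hy2 k
    simp only [triangle, mem_setOf_eq, not_and, not_forall] at this
    obtain ⟨α, hα1, hα2⟩ := this (hyE k)
    exact ⟨α, hα1, not_nonempty_iff_eq_empty.mp hα2⟩
  choose α hα1 hα2 using hα
  have hytend : Tendsto y atTop (𝓝 x) := by
    rw [Metric.tendsto_atTop]
    intro ε hε
    obtain ⟨N, hN⟩ := exists_nat_one_div_lt hε
    refine ⟨N, fun k hk => ?_⟩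
    have h1 : dist (y k) x < min δ (1/(k+1)) := mem_ball.mp (hy1 k)
    have h2 : (1:ℝ)/(k+1) ≤ 1/(N+1) := by
      apply one_div_le_one_div_of_le (by positivity)
      exact_mod_cast by exact_mod_cast add_le_add_left (Nat.cast_le.mpr hk : (N:ℝ) ≤ k) 1
    calc dist (y k) x < min δ (1/(k+1)) := h1
      _ ≤ 1/(k+1) := min_le_right _ _
      _ ≤ 1/(N+1) := h2
      _ < ε := hN
  have hsph : ∀ k, α k ∈ sphere (0 : EuclideanSpace ℝ (Fin n)) 1 := by
    intro k; simpa [mem_sphere_zero_iff_norm] using hα1 k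
  obtain ⟨a, ha, φ, hφ, hconv⟩ :=
    (isCompact_sphere (0 : EuclideanSpace ℝ (Fin n)) 1).tendsto_subseq hsph
  have haN : ‖a‖ = 1 := mem_sphere_zero_iff_norm.mp ha
  obtain ⟨z, ⟨t, hzt⟩, hzE⟩ := hx.2 a haN
  have hutend : Tendsto (fun k => y (φ k) + t • α (φ k)) atTop (𝓝 (x + t • a)) :=
    (hytend.comp hφ.tendsto_atTop).add (hconv.const_smul t)
  have hev : ∀ᶠ k in atTop, y (φ k) + t • α (φ k) ∈ E :=
    hutend (hE.mem_nhds (hzt ▸ hzE))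
  obtain ⟨k, hk⟩ := hev.exists
  have : y (φ k) + t • α (φ k) ∈ line (y (φ k)) (α (φ k)) ∩ E := ⟨⟨t, rfl⟩, hk⟩
  rw [hα2 (φ k)] at this
  exact this

theorem triangle_line_family {n : ℕ} (hn : 2 ≤ n) (E : Set (EuclideanSpace ℝ (Fin n)))
    (hE : IsOpen E) (hwc : WeaklyConvex E) (hne : (triangle E).Nonempty) :
    ∃ γ : EuclideanSpace ℝ (Fin n) → Set (EuclideanSpace ℝ (Fin n)),
      (∀ x ∈ frontier (triangle E),
        (∃ α : EuclideanSpace ℝ (Fin n), ‖α‖ = 1 ∧ γ x = line x α) ∧ γ x ∩ E = ∅) ∧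
      ¬ ∃ y ∈ triangle E, ∃ α : EuclideanSpace ℝ (Fin n), ‖α‖ = 1 ∧
          line y α ⊆ (⋃ x ∈ frontier (triangle E), γ x) ∪ triangle E := by
  classical
  have hopen := triangle_isOpen hE hwc
  have hP : ∀ x ∈ frontier (triangle E),
      ∃ α : EuclideanSpace ℝ (Fin n), ‖α‖ = 1 ∧ line x α ∩ E = ∅ := by
    intro x hxf
    have hxnt : x ∉ triangle E := by
      intro hxt
      exact hxf.2 (by simpa [hopen.interior_eq] using hxt)
    have hxnE : x ∉ E := by
      intro hxE
      obtain ⟨z, hz1, hz2⟩ := mem_closure_iff.mp hxf.1 E hE hxE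
      exact hz2.1 hz1
    simp only [triangle, mem_setOf_eq, not_and, not_forall] at hxnt
    obtain ⟨α, hα1, hα2⟩ := hxnt hxnE
    exact ⟨α, hα1, not_nonempty_iff_eq_empty.mp hα2⟩
  set P : EuclideanSpace ℝ (Fin n) → Prop :=
    fun x => ∃ α : EuclideanSpace ℝ (Fin n), ‖α‖ = 1 ∧ line x α ∩ E = ∅ with hPdef
  refine ⟨fun x => if h : P x then line x h.choose else ∅, ?_, ?_⟩
  · intro x hxf
    have hPx : P x := hP x hxf
    constructor
    · exact ⟨hPx.choose, hPx.choose_spec.1, by simp [hPx]⟩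
    · simpa [hPx] using hPx.choose_spec.2
  · rintro ⟨y, hy, α, hα, hsub⟩
    obtain ⟨z, hz1, hz2⟩ := hy.2 α hα
    rcases hsub hz1 with hz3 | hz3
    · simp only [mem_iUnion] at hz3
      obtain ⟨x, hxf, hzx⟩ := hz3
      have hPx : P x := hP x hxf
      rw [dif_pos hPx] at hzx
      have := hPx.choose_spec.2
      exact absurd this (by intro h; exact absurd h (by
        exact fun hh => (Set.eq_empty_iff_forall_notMem.mp hh z) ⟨hzx, hz2⟩))
    · exact hz3.1 hz2
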